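/- Let d ≥ 1, R₀ > 0, p ≥ 1, and let f₁, …, f_p : (0, R₀²) → ℝ be continuous functions that are linearly independent (over ℝ) as functions on (0, R₀²). Let X ∈ ℝ^p and suppose that for Lebesgue-almost every x = (x^{(1)},…,x^{(d)}) in the open ball B(0,R₀) ⊂ ℝ^d one has (∑_{k=1}^d x^{(k)}) · (∑_{i=1}^p X_i f_i(‖x‖²)) = 0. Then X = 0. -/

import Mathlib

open MeasureTheory

/-- Identification step: if `f₁, …, f_p` are continuous and linearly
independent functions on `(0, R₀²)` and, for Lebesgue-a.e. `x` in the ball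
`B(0,R₀) ⊂ ℝ^d`, `(∑_k x^(k)) · (∑_i X_i f_i(‖x‖²)) = 0`, then `X = 0`. -/
theorem identification_ball
    (d : ℕ) (hd : 1 ≤ d) (R₀ : ℝ) (hR₀ : 0 < R₀) (p : ℕ) (hp : 1 ≤ p)
    (f : Fin p → ℝ → ℝ)
    (hcont : ∀ i, ContinuousOn (f i) (Set.Ioo 0 (R₀ ^ 2)))
    (hindep : LinearIndependent ℝ fun i => (Set.Ioo (0:ℝ) (R₀ ^ 2)).restrict (f i))
    (X : Fin p → ℝ)
    (h : ∀ᵐ x ∂(volume.restrict (Metric.ball (0 : EuclideanSpace ℝ (Fin d)) R₀)),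
      (∑ k, x k) * (∑ i, X i * f i (‖x‖ ^ 2)) = 0) :
    X = 0 := by
  set g : ℝ → ℝ := fun t => ∑ i, X i * f i t with hg
  -- Step 1: g vanishes on (0, R₀²)
  have hgzero : ∀ t ∈ Set.Ioo (0:ℝ) (R₀ ^ 2), g t = 0 := by
    intro t₀ ht₀
    by_contra hne
    have hgcont : ContinuousOn g (Set.Ioo 0 (R₀ ^ 2)) :=
      continuousOn_finset_sum _ fun i _ => (continuousOn_const.mul (hcont i))
    have hat : ContinuousAt g t₀ :=
      hgcont.continuousAt (isOpen_Ioo.mem_nhds ht₀)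
    -- get an open set V ∋ t₀, V ⊆ Ioo, g ≠ 0 on V
    have hmem : ∀ᶠ t in nhds t₀, t ∈ Set.Ioo (0:ℝ) (R₀ ^ 2) := isOpen_Ioo.mem_nhds ht₀
    have hev : ∀ᶠ t in nhds t₀, t ∈ Set.Ioo (0:ℝ) (R₀ ^ 2) ∧ g t ≠ 0 :=
      hmem.and (hat.eventually_ne hne)
    obtain ⟨V, hVsub, hVopen, ht₀V⟩ := mem_nhds_iff.mp hev
    -- the set S
    set S : Set (EuclideanSpace ℝ (Fin d)) :=
      Metric.ball 0 R₀ ∩ ((fun x => ‖x‖ ^ 2) ⁻¹' V) ∩ {x | (∑ k, x k) ≠ 0} with hS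
    have hSopen : IsOpen S := by
      have h1 : Continuous fun x : EuclideanSpace ℝ (Fin d) => ‖x‖ ^ 2 :=
        (continuous_norm.pow 2)
      have h2 : Continuous fun x : EuclideanSpace ℝ (Fin d) => ∑ k, x k :=
        continuous_finset_sum _ fun k _ => (EuclideanSpace.proj k).continuous
      exact (Metric.isOpen_ball.inter (hVopen.preimage h1)).inter
        (isOpen_ne.preimage h2)
    -- S is nonempty
    have hSne : S.Nonempty := by
      have hd0 : (0:ℝ) < d := by exact_mod_cast Nat.lt_of_lt_of_le Nat.zero_lt_one hd
      set c : ℝ := Real.sqrt (t₀ / d) with hc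
      have hc0 : 0 < c := Real.sqrt_pos.mpr (div_pos ht₀.1 hd0)
      set v : EuclideanSpace ℝ (Fin d) := WithLp.toLp 2 (fun _ => c) with hv
      have hnorm : ‖v‖ ^ 2 = t₀ := by
        have := EuclideanSpace.norm_eq v
        rw [this, Real.sq_sqrt (by positivity)]
        simp only [hv, PiLp.toLp_apply, Real.norm_eq_abs, sq_abs, abs_of_pos hc0, hc,
          Real.sq_sqrt (le_of_lt (div_pos ht₀.1 hd0)), Finset.sum_const,
          Finset.card_univ, Fintype.card_fin, nsmul_eq_mul]
        field_simp
      refine ⟨v, ?_, ?_⟩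
      · constructor
        · rw [Metric.mem_ball, dist_zero_right]
          refine lt_of_pow_lt_pow_left₀ 2 hR₀.le ?_
          rw [hnorm]; exact ht₀.2
        · show ‖v‖ ^ 2 ∈ V
          rw [hnorm]; exact ht₀V
      · show (∑ k, v k) ≠ 0
        simp only [hv, PiLp.toLp_apply, Finset.sum_const, Finset.card_univ, Fintype.card_fin, nsmul_eq_mul]
        exact ne_of_gt (mul_pos hd0 hc0)
    -- S is null
    have hSnull : volume S = 0 := by
      have h' := (ae_restrict_iff' measurableSet_ball).mp h
      rw [ae_iff] at h'
      refine measure_mono_null ?_ h'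
      intro x hx
      simp only [Set.mem_setOf_eq]
      intro hP
      have hx1 : x ∈ Metric.ball (0 : EuclideanSpace ℝ (Fin d)) R₀ := hx.1.1
      have := hP hx1
      rcases mul_eq_zero.mp this with h1 | h2
      · exact hx.2 h1
      · exact (hVsub hx.1.2).2 h2
    exact absurd hSnull (hSopen.measure_pos volume hSne).ne'
  -- Step 2: linear independence gives X = 0
  have := Fintype.linearIndependent_iff.mp hindep X ?_
  · funext i; exact this i
  · funext t
    have : g (t : ℝ) = 0 := hgzero t t.2
    simp [Finset.sum_apply]; exact this
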